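/- arXiv:1104.4433 — 2 statements merged into one kernel-verified Lean document; each statement's English description precedes it below -/
import Mathlib

section
/- Let G=(V,E) be a graph with V={1,...,n}. Define arc-annotated sequences S1=S2=a^n over alphabet {a}, with arc sets P1=E and P2=∅. Then G has an independent set of size at least k if and only if S1 and S2 have an arc-preserving common subsequence of length at least k in which every matched pair of positions (i,j) satisfies i=j. -/
/-- For a graph `G = ({1,…,n}, E)` (edges stored with smaller
endpoint first), with arc-annotated sequences `S1 = S2 = a^n`, `P1 = E`,
`P2 = ∅`, `G` has an independent set of size ≥ k iff there is an
arc-preserving common subsequence of length ≥ k whose matches are all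
diagonal (position `i` matched to position `i`). -/
theorem stmt0 (n k : ℕ) (E : Finset (ℕ × ℕ))
    (hE : ∀ p ∈ E, 1 ≤ p.1 ∧ p.1 < p.2 ∧ p.2 ≤ n) :
    (∃ I : Finset ℕ, I ⊆ Finset.Icc 1 n ∧
        (∀ i ∈ I, ∀ j ∈ I, (i, j) ∉ E) ∧ k ≤ I.card) ↔
    (∃ M : Finset (ℕ × ℕ),
        (∀ p ∈ M, p.1 = p.2 ∧ 1 ≤ p.1 ∧ p.1 ≤ n) ∧
        (∀ p ∈ M, ∀ q ∈ M, ((p.1, q.1) ∈ E ↔ (p.2, q.2) ∈ (∅ : Finset (ℕ × ℕ)))) ∧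
        k ≤ M.card) := by
  constructor
  · rintro ⟨I, hI, hind, hk⟩
    refine ⟨I.image (fun i => (i, i)), ?_, ?_, ?_⟩
    · intro p hp
      simp only [Finset.mem_image] at hp
      obtain ⟨i, hi, rfl⟩ := hp
      have := hI hi
      simp only [Finset.mem_Icc] at this
      exact ⟨rfl, this.1, this.2⟩
    · intro p hp q hq
      simp only [Finset.mem_image] at hp hq
      obtain ⟨i, hi, rfl⟩ := hp
      obtain ⟨j, hj, rfl⟩ := hq
      simp [hind i hi j hj]
    · refine le_trans hk (le_of_eq ?_)
      exact (Finset.card_image_of_injective _ (fun a b h => by simpa using h)).symm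
  · rintro ⟨M, hM, harc, hk⟩
    refine ⟨M.image Prod.fst, ?_, ?_, ?_⟩
    · intro i hi
      simp only [Finset.mem_image] at hi
      obtain ⟨p, hp, rfl⟩ := hi
      have := hM p hp
      simp [Finset.mem_Icc, this.2.1, this.2.2]
    · intro i hi j hj hij
      simp only [Finset.mem_image] at hi hj
      obtain ⟨p, hp, rfl⟩ := hi
      obtain ⟨q, hq, rfl⟩ := hj
      exact absurd ((harc p hp q hq).mp hij) (by simp)
    · refine le_trans hk (le_of_eq ?_)
      refine (Finset.card_image_of_injOn ?_).symm
      intro p hp q hq h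
      have hp' := (hM p hp).1
      have hq' := (hM q hq).1
      exact Prod.ext h (by rw [← hp', ← hq', h])
end

section
/- Let G=(V,E) be a connected loopless graph on {1,...,n}, and let S1=S2=(b a^n b)^n with arc sets P1 (encoding E via (α,β): α=(i−1)(n+2)+j+1, β=(j−1)(n+2)+i+1 for (i,j) ∈ E, plus block arcs ((i−1)(n+2)+1, i(n+2)) for each i) and P2 (block arcs only). If G has an independent set I of size k, then M = {(j,j) : j=(i−1)(n+2)+l, i ∈ I, 1 ≤ l ≤ n+2} is a diagonal arc-preserving mapping between (S1,P1) and (S2,P2) of size k(n+2). -/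
lemma stmt7_key (n i i' l l' : ℕ) (hi : 1 ≤ i) (hi' : 1 ≤ i')
    (hl : 1 ≤ l) (hl2 : l ≤ n + 2) (hl' : 1 ≤ l') (hl2' : l' ≤ n + 2)
    (h : (i - 1) * (n + 2) + l = (i' - 1) * (n + 2) + l') : i = i' ∧ l = l' := by
  have h' : (n + 2) * (i - 1) + (l - 1) = (n + 2) * (i' - 1) + (l' - 1) := by
    have e1 : (i - 1) * (n + 2) = (n + 2) * (i - 1) := Nat.mul_comm _ _
    have e2 : (i' - 1) * (n + 2) = (n + 2) * (i' - 1) := Nat.mul_comm _ _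
    rw [e1, e2] at h
    omega
  have hm : l - 1 = l' - 1 := by
    have := congrArg (· % (n + 2)) h'
    simpa [Nat.mul_add_mod, Nat.mod_eq_of_lt (show l - 1 < n + 2 by omega),
      Nat.mod_eq_of_lt (show l' - 1 < n + 2 by omega)] using this
  have hd : i - 1 = i' - 1 := by
    have := congrArg (· / (n + 2)) h'
    simpa [Nat.mul_add_div (show 0 < n + 2 by omega),
      Nat.div_eq_of_lt (show l - 1 < n + 2 by omega),
      Nat.div_eq_of_lt (show l' - 1 < n + 2 by omega)] using this
  omega

/-- Let `G = ({1,…,n}, E)` be a connected loopless graph and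
`S1 = S2 = (b a^n b)^n` with arc sets `P1` (edge arcs plus block arcs) and `P2`
(block arcs only).  If `G` has an independent set `I` of size `k`, then the set
of positions `M = {(i−1)(n+2)+l : i ∈ I, 1 ≤ l ≤ n+2}` (matching each position
to itself) is a diagonal arc-preserving mapping between `(S1,P1)` and
`(S2,P2)` of size `k(n+2)`. -/
theorem stmt7 (n k : ℕ) (E : Set (ℕ × ℕ))
    (hE : ∀ p ∈ E, 1 ≤ p.1 ∧ p.1 ≤ n ∧ 1 ≤ p.2 ∧ p.2 ≤ n ∧ p.1 ≠ p.2)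
    (hsym : ∀ p ∈ E, (p.2, p.1) ∈ E)
    (hconn : ∀ u ∈ Finset.Icc 1 n, ∀ v ∈ Finset.Icc 1 n, u ≠ v →
      Relation.ReflTransGen (fun x y => (x, y) ∈ E) u v)
    (P1 P2 : Set (ℕ × ℕ))
    (hP1 : ∀ α β : ℕ, ((α, β) ∈ P1 ↔
      ((∃ i ∈ Finset.Icc 1 n, ∃ j ∈ Finset.Icc 1 n, (i, j) ∈ E ∧
          α = (i - 1) * (n + 2) + j + 1 ∧ β = (j - 1) * (n + 2) + i + 1) ∨
       (∃ i ∈ Finset.Icc 1 n, α = (i - 1) * (n + 2) + 1 ∧ β = i * (n + 2)))))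
    (hP2 : ∀ α β : ℕ, ((α, β) ∈ P2 ↔
      ∃ i ∈ Finset.Icc 1 n, α = (i - 1) * (n + 2) + 1 ∧ β = i * (n + 2)))
    (I : Finset ℕ) (hI : I ⊆ Finset.Icc 1 n)
    (hind : ∀ i ∈ I, ∀ j ∈ I, (i, j) ∉ E) (hcard : I.card = k) :
    ∃ M : Finset ℕ,
      M = (I ×ˢ Finset.Icc 1 (n + 2)).image (fun q => (q.1 - 1) * (n + 2) + q.2) ∧
      (∀ p ∈ M, ∀ q ∈ M, ((p, q) ∈ P1 ↔ (p, q) ∈ P2)) ∧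
      M.card = k * (n + 2) := by
  refine ⟨_, rfl, ?_, ?_⟩
  · intro p hp q hq
    rw [hP1, hP2]
    constructor
    · rintro (⟨i, hi, j, hj, hij, hp', hq'⟩ | h)
      · exfalso
        simp only [Finset.mem_image, Finset.mem_product, Finset.mem_Icc] at hp hq
        obtain ⟨⟨i', l⟩, ⟨hi'I, hl1, hl2⟩, heq⟩ := hp
        obtain ⟨⟨j', l2⟩, ⟨hj'I, hl1', hl2'⟩, heq'⟩ := hq
        simp only [Finset.mem_Icc] at hi hj
        have hi'b := Finset.mem_Icc.mp (hI hi'I)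
        have hj'b := Finset.mem_Icc.mp (hI hj'I)
        have e1 : (i' - 1) * (n + 2) + l = (i - 1) * (n + 2) + (j + 1) := by
          simp only at heq; omega
        have e2 : (j' - 1) * (n + 2) + l2 = (j - 1) * (n + 2) + (i + 1) := by
          simp only at heq'; omega
        have k1 := stmt7_key n i' i l (j + 1) hi'b.1 hi.1 hl1 hl2
          (by omega) (by omega) e1
        have k2 := stmt7_key n j' j l2 (i + 1) hj'b.1 hj.1 hl1' hl2'
          (by omega) (by omega) e2
        exact hind i (k1.1 ▸ hi'I) j (k2.1 ▸ hj'I) hij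
      · exact h
    · exact fun h => Or.inr h
  · have hinj : Set.InjOn (fun q : ℕ × ℕ => (q.1 - 1) * (n + 2) + q.2)
        ↑(I ×ˢ Finset.Icc 1 (n + 2)) := by
      intro ⟨i, l⟩ hm ⟨i', l'⟩ hm' heq
      simp only [Finset.coe_product, Set.mem_prod, Finset.mem_coe, Finset.mem_Icc] at hm hm'
      have hib := Finset.mem_Icc.mp (hI hm.1)
      have hib' := Finset.mem_Icc.mp (hI hm'.1)
      have := stmt7_key n i i' l l' hib.1 hib'.1 hm.2.1 hm.2.2 hm'.2.1 hm'.2.2 heq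
      exact Prod.ext this.1 this.2
    rw [Finset.card_image_of_injOn hinj, Finset.card_product, hcard, Nat.card_Icc]
    norm_num
end
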